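/- Let S′ be a finite nonempty index set, let f_i > 0 and w_i ≥ 0 be given for each i ∈ S′, let f^max = max_{i∈S′} f_i and f^min = min_{i∈S′} f_i, let H ≥ 1 be an integer, and let values 0 ≤ ȳ_i ≤ 1 (i ∈ S′) satisfy Σ_{i∈S′} ȳ_i = H. Then there exist 0/1 values ŷ_i (i ∈ S′) such that Σ_{i∈S′} w_i ŷ_i ≥ Σ_{i∈S′} w_i ȳ_i and Σ_{i∈S′} f_i ŷ_i ≤ (1 − 1/H + f^max/(H · f^min)) · Σ_{i∈S′} f_i ȳ_i. -/

import Mathlib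

namespace Stmt15

variable {ι : Type*}

open Finset

noncomputable def frac (S : Finset ι) (y : ι → ℝ) : Finset ι :=
  S.filter (fun x => y x ≠ 0 ∧ y x ≠ 1)

lemma mem_frac {S : Finset ι} {y : ι → ℝ} {x : ι} :
    x ∈ frac S y ↔ x ∈ S ∧ y x ≠ 0 ∧ y x ≠ 1 := by
  simp [frac]

lemma sum_bump [DecidableEq ι] (S : Finset ι) {i : ι} (hi : i ∈ S) (u : ι → ℝ) (α : ℝ) :
    ∑ x ∈ S, u x * (if x = i then α else 0) = u i * α := by
  rw [Finset.sum_eq_single i]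
  · simp
  · intro b _ hb; simp [hb]
  · intro h; exact absurd hi h

lemma sum_shift3 [DecidableEq ι] (S : Finset ι) {i j k : ι} (hi : i ∈ S) (hj : j ∈ S) (hk : k ∈ S)
    (u y : ι → ℝ) (α β γ : ℝ) :
    ∑ x ∈ S, u x * (y x + ((if x = i then α else 0) + (if x = j then β else 0) + (if x = k then γ else 0)))
      = ∑ x ∈ S, u x * y x + (u i * α + u j * β + u k * γ) := by
  simp only [mul_add, Finset.sum_add_distrib, sum_bump S hi, sum_bump S hj, sum_bump S hk]

lemma sum_shift3' [DecidableEq ι] (S : Finset ι) {i j k : ι} (hi : i ∈ S) (hj : j ∈ S) (hk : k ∈ S)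
    (y : ι → ℝ) (α β γ : ℝ) :
    ∑ x ∈ S, (y x + ((if x = i then α else 0) + (if x = j then β else 0) + (if x = k then γ else 0)))
      = ∑ x ∈ S, y x + (α + β + γ) := by
  simp only [Finset.sum_add_distrib, Finset.sum_ite_eq', hi, hj, hk, if_pos]


lemma move [DecidableEq ι] (S : Finset ι) (f w y : ι → ℝ)
    (hbox : ∀ x ∈ S, 0 ≤ y x ∧ y x ≤ 1)
    {i j k : ι} (hi : i ∈ frac S y) (hj : j ∈ frac S y) (hk : k ∈ frac S y)
    (hij : i ≠ j) (hik : i ≠ k) (hjk : j ≠ k)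
    (α β γ : ℝ)
    (hsum0 : α + β + γ = 0)
    (hw0 : w i * α + w j * β + w k * γ = 0)
    (hf0 : f i * α + f j * β + f k * γ ≤ 0)
    (hbi : 0 ≤ y i + α ∧ y i + α ≤ 1)
    (hbj : 0 ≤ y j + β ∧ y j + β ≤ 1)
    (hbk : 0 ≤ y k + γ ∧ y k + γ ≤ 1)
    (hhit : (y i + α = 0 ∨ y i + α = 1) ∨ (y j + β = 0 ∨ y j + β = 1) ∨ (y k + γ = 0 ∨ y k + γ = 1)) :
    ∃ y', (∀ x ∈ S, 0 ≤ y' x ∧ y' x ≤ 1) ∧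
      (∑ x ∈ S, y' x = ∑ x ∈ S, y x) ∧
      (∑ x ∈ S, w x * y' x = ∑ x ∈ S, w x * y x) ∧
      (∑ x ∈ S, f x * y' x ≤ ∑ x ∈ S, f x * y x) ∧
      (frac S y').card < (frac S y).card := by
  have hiS := (mem_frac.mp hi).1
  have hjS := (mem_frac.mp hj).1
  have hkS := (mem_frac.mp hk).1
  refine ⟨fun x => y x + ((if x = i then α else 0) + (if x = j then β else 0) + (if x = k then γ else 0)),
    ?_, ?_, ?_, ?_, ?_⟩
  · intro x hx
    by_cases hxi : x = i
    · subst hxi; simpa [hij, hik] using hbi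
    · by_cases hxj : x = j
      · subst hxj; simpa [Ne.symm hij, hjk] using hbj
      · by_cases hxk : x = k
        · subst hxk; simpa [Ne.symm hik, Ne.symm hjk] using hbk
        · simpa [hxi, hxj, hxk] using hbox x hx
  · have h := sum_shift3' S hiS hjS hkS y α β γ
    rw [hsum0, add_zero] at h
    exact h
  · have h := sum_shift3 S hiS hjS hkS w y α β γ
    rw [hw0, add_zero] at h
    exact h
  · have h := sum_shift3 S hiS hjS hkS f y α β γ
    rw [h]
    linarith
  · set y' : ι → ℝ := fun x => y x + ((if x = i then α else 0) + (if x = j then β else 0) + (if x = k then γ else 0)) with hy'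
    have hvi : y' i = y i + α := by simp [hy', hij, hik]
    have hvj : y' j = y j + β := by simp [hy', Ne.symm hij, hjk]
    have hvk : y' k = y k + γ := by simp [hy', Ne.symm hik, Ne.symm hjk]
    have hvo : ∀ x, x ≠ i → x ≠ j → x ≠ k → y' x = y x := by
      intro x h1 h2 h3; simp [hy', h1, h2, h3]
    have hsub : frac S y' ⊆ frac S y := by
      intro x hx
      by_cases hxi : x = i; · subst hxi; exact hi
      by_cases hxj : x = j; · subst hxj; exact hj
      by_cases hxk : x = k; · subst hxk; exact hk
      rw [mem_frac] at hx ⊢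
      rwa [hvo x hxi hxj hxk] at hx
    have hwit : ∃ c, c ∈ frac S y ∧ c ∉ frac S y' := by
      rcases hhit with h | h | h
      · exact ⟨i, hi, by simp only [mem_frac, hvi]; tauto⟩
      · exact ⟨j, hj, by simp only [mem_frac, hvj]; tauto⟩
      · exact ⟨k, hk, by simp only [mem_frac, hvk]; tauto⟩
    obtain ⟨c, hc1, hc2⟩ := hwit
    exact Finset.card_lt_card ((Finset.ssubset_iff_of_subset hsub).mpr ⟨c, hc1, hc2⟩)


noncomputable def Tstep (s v : ℝ) : ℝ := if 0 < s then (1 - v) / s else v / (-s)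

lemma Tstep_pos {s v : ℝ} (hs : s ≠ 0) (h0 : 0 < v) (h1 : v < 1) : 0 < Tstep s v := by
  unfold Tstep
  split
  · rename_i hsp; exact div_pos (by linarith) hsp
  · rename_i hsp
    have hneg : s < 0 := lt_of_le_of_ne (not_lt.1 hsp) hs
    exact div_pos h0 (by linarith)

lemma Tstep_box {s v t : ℝ} (hs : s ≠ 0) (h0 : 0 ≤ v) (h1 : v ≤ 1) (ht : 0 ≤ t)
    (hle : t ≤ Tstep s v) : 0 ≤ v + t * s ∧ v + t * s ≤ 1 := by
  unfold Tstep at hle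
  split at hle
  · rename_i hsp
    have h2 : t * s ≤ 1 - v := (le_div_iff₀ hsp).mp hle
    constructor
    · nlinarith
    · linarith
  · rename_i hsp
    have hneg : s < 0 := lt_of_le_of_ne (not_lt.1 hsp) hs
    have h2 : t * (-s) ≤ v := by
      have := (le_div_iff₀ (by linarith : (0:ℝ) < -s)).mp hle
      linarith
    constructor
    · nlinarith
    · nlinarith

lemma Tstep_hit {s v : ℝ} (hs : s ≠ 0) : v + Tstep s v * s = 0 ∨ v + Tstep s v * s = 1 := by
  unfold Tstep
  split
  · rename_i hsp
    right; field_simp; ring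
  · rename_i hsp
    have hneg : s < 0 := lt_of_le_of_ne (not_lt.1 hsp) hs
    left
    have : v / (-s) * s = -v := by
      rw [div_neg, neg_mul, div_mul_cancel₀ v hs]
    rw [this]; ring

lemma pairmove [DecidableEq ι] (S : Finset ι) (f w y : ι → ℝ)
    (hbox : ∀ x ∈ S, 0 ≤ y x ∧ y x ≤ 1)
    {i j k : ι} (hi : i ∈ frac S y) (hj : j ∈ frac S y) (hk : k ∈ frac S y)
    (hij : i ≠ j) (hik : i ≠ k) (hjk : j ≠ k)
    (hww : w i = w j) (hff : f i ≤ f j) :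
    ∃ y', (∀ x ∈ S, 0 ≤ y' x ∧ y' x ≤ 1) ∧
      (∑ x ∈ S, y' x = ∑ x ∈ S, y x) ∧
      (∑ x ∈ S, w x * y' x = ∑ x ∈ S, w x * y x) ∧
      (∑ x ∈ S, f x * y' x ≤ ∑ x ∈ S, f x * y x) ∧
      (frac S y').card < (frac S y).card := by
  obtain ⟨hiS, hi0, hi1⟩ := mem_frac.mp hi
  obtain ⟨hjS, hj0, hj1⟩ := mem_frac.mp hj
  obtain ⟨hyi0, hyi1⟩ := hbox i hiS
  obtain ⟨hyj0, hyj1⟩ := hbox j hjS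
  have hyi1' : y i < 1 := lt_of_le_of_ne hyi1 hi1
  have hyj0' : 0 < y j := lt_of_le_of_ne hyj0 (Ne.symm hj0)
  set t := min (1 - y i) (y j) with htdef
  have ht0 : 0 < t := lt_min (by linarith) hyj0'
  have ht1 : t ≤ 1 - y i := min_le_left _ _
  have ht2 : t ≤ y j := min_le_right _ _
  apply move S f w y hbox hi hj hk hij hik hjk t (-t) 0
  · ring
  · linear_combination t * hww
  · nlinarith
  · constructor <;> linarith
  · constructor <;> linarith
  · simpa using hbox k (mem_frac.mp hk).1
  · rcases min_cases (1 - y i) (y j) with ⟨he, _⟩ | ⟨he, _⟩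
    · left; right
      rw [htdef, he]; ring
    · right; left; left
      rw [htdef, he]; ring

lemma tripmove [DecidableEq ι] (S : Finset ι) (f w y : ι → ℝ)
    (hbox : ∀ x ∈ S, 0 ≤ y x ∧ y x ≤ 1)
    {i j k : ι} (hi : i ∈ frac S y) (hj : j ∈ frac S y) (hk : k ∈ frac S y)
    (hij : i ≠ j) (hik : i ≠ k) (hjk : j ≠ k)
    (a b c : ℝ) (ha : a ≠ 0) (hb : b ≠ 0) (hc : c ≠ 0)
    (h0 : a + b + c = 0) (hw0 : w i * a + w j * b + w k * c = 0)
    (hf0 : f i * a + f j * b + f k * c ≤ 0) :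
    ∃ y', (∀ x ∈ S, 0 ≤ y' x ∧ y' x ≤ 1) ∧
      (∑ x ∈ S, y' x = ∑ x ∈ S, y x) ∧
      (∑ x ∈ S, w x * y' x = ∑ x ∈ S, w x * y x) ∧
      (∑ x ∈ S, f x * y' x ≤ ∑ x ∈ S, f x * y x) ∧
      (frac S y').card < (frac S y).card := by
  obtain ⟨hiS, hi0, hi1⟩ := mem_frac.mp hi
  obtain ⟨hjS, hj0, hj1⟩ := mem_frac.mp hj
  obtain ⟨hkS, hk0, hk1⟩ := mem_frac.mp hk
  obtain ⟨hyi0, hyi1⟩ := hbox i hiS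
  obtain ⟨hyj0, hyj1⟩ := hbox j hjS
  obtain ⟨hyk0, hyk1⟩ := hbox k hkS
  have hyi0' : 0 < y i := lt_of_le_of_ne hyi0 (Ne.symm hi0)
  have hyi1' : y i < 1 := lt_of_le_of_ne hyi1 hi1
  have hyj0' : 0 < y j := lt_of_le_of_ne hyj0 (Ne.symm hj0)
  have hyj1' : y j < 1 := lt_of_le_of_ne hyj1 hj1
  have hyk0' : 0 < y k := lt_of_le_of_ne hyk0 (Ne.symm hk0)
  have hyk1' : y k < 1 := lt_of_le_of_ne hyk1 hk1
  set Ta := Tstep a (y i) with hTa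
  set Tb := Tstep b (y j) with hTb
  set Tc := Tstep c (y k) with hTc
  set t := min Ta (min Tb Tc) with htdef
  have ht0 : 0 < t :=
    lt_min (Tstep_pos ha hyi0' hyi1') (lt_min (Tstep_pos hb hyj0' hyj1') (Tstep_pos hc hyk0' hyk1'))
  have hta : t ≤ Ta := min_le_left _ _
  have htb : t ≤ Tb := le_trans (min_le_right _ _) (min_le_left _ _)
  have htc : t ≤ Tc := le_trans (min_le_right _ _) (min_le_right _ _)
  apply move S f w y hbox hi hj hk hij hik hjk (t * a) (t * b) (t * c)
  · linear_combination t * h0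
  · linear_combination t * hw0
  · have he : f i * (t * a) + f j * (t * b) + f k * (t * c) = t * (f i * a + f j * b + f k * c) := by
      ring
    rw [he]
    exact mul_nonpos_of_nonneg_of_nonpos ht0.le hf0
  · exact Tstep_box ha hyi0 hyi1 ht0.le hta
  · exact Tstep_box hb hyj0 hyj1 ht0.le htb
  · exact Tstep_box hc hyk0 hyk1 ht0.le htc
  · have hcase : t = Ta ∨ t = Tb ∨ t = Tc := by
      rcases min_cases Ta (min Tb Tc) with ⟨h, _⟩ | ⟨h, _⟩
      · exact Or.inl h
      · rcases min_cases Tb Tc with ⟨h2, _⟩ | ⟨h2, _⟩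
        · exact Or.inr (Or.inl (h.trans h2))
        · exact Or.inr (Or.inr (h.trans h2))
    rcases hcase with h | h | h
    · left; rw [h, hTa]; exact Tstep_hit ha
    · right; left; rw [h, hTb]; exact Tstep_hit hb
    · right; right; rw [h, hTc]; exact Tstep_hit hc

lemma onestep [DecidableEq ι] (S : Finset ι) (f w y : ι → ℝ)
    (hbox : ∀ x ∈ S, 0 ≤ y x ∧ y x ≤ 1)
    (h3 : 3 ≤ (frac S y).card) :
    ∃ y', (∀ x ∈ S, 0 ≤ y' x ∧ y' x ≤ 1) ∧
      (∑ x ∈ S, y' x = ∑ x ∈ S, y x) ∧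
      (∑ x ∈ S, w x * y' x = ∑ x ∈ S, w x * y x) ∧
      (∑ x ∈ S, f x * y' x ≤ ∑ x ∈ S, f x * y x) ∧
      (frac S y').card < (frac S y).card := by
  obtain ⟨i, hi⟩ := Finset.card_pos.mp (by omega : 0 < (frac S y).card)
  obtain ⟨j, hj'⟩ := Finset.card_pos.mp (by
    rw [Finset.card_erase_of_mem hi]; omega : 0 < ((frac S y).erase i).card)
  obtain ⟨k, hk'⟩ := Finset.card_pos.mp (by
    rw [Finset.card_erase_of_mem hj', Finset.card_erase_of_mem hi]; omega :
      0 < (((frac S y).erase i).erase j).card)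
  obtain ⟨hkj, hk''⟩ := Finset.mem_erase.mp hk'
  obtain ⟨hki, hk⟩ := Finset.mem_erase.mp hk''
  obtain ⟨hji, hj⟩ := Finset.mem_erase.mp hj'
  have hij : i ≠ j := Ne.symm hji
  have hik : i ≠ k := Ne.symm hki
  have hjk : j ≠ k := Ne.symm hkj
  by_cases h1 : w i = w j
  · rcases le_total (f i) (f j) with hf | hf
    · exact pairmove S f w y hbox hi hj hk hij hik hjk h1 hf
    · exact pairmove S f w y hbox hj hi hk hij.symm hjk hik h1.symm hf
  by_cases h2 : w j = w k
  · rcases le_total (f j) (f k) with hf | hf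
    · exact pairmove S f w y hbox hj hk hi hjk hji hki h2 hf
    · exact pairmove S f w y hbox hk hj hi hjk.symm hki hji h2.symm hf
  by_cases h4 : w i = w k
  · rcases le_total (f i) (f k) with hf | hf
    · exact pairmove S f w y hbox hi hk hj hik hij hkj h4 hf
    · exact pairmove S f w y hbox hk hi hj hik.symm hkj hij h4.symm hf
  · have ha : w j - w k ≠ 0 := sub_ne_zero.mpr h2
    have hb : w k - w i ≠ 0 := sub_ne_zero.mpr (fun h => h4 h.symm)
    have hc : w i - w j ≠ 0 := sub_ne_zero.mpr h1
    rcases le_total (f i * (w j - w k) + f j * (w k - w i) + f k * (w i - w j)) 0 with hf | hf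
    · exact tripmove S f w y hbox hi hj hk hij hik hjk _ _ _ ha hb hc (by ring) (by ring) hf
    · refine tripmove S f w y hbox hi hj hk hij hik hjk
        (-(w j - w k)) (-(w k - w i)) (-(w i - w j))
        (neg_ne_zero.mpr ha) (neg_ne_zero.mpr hb) (neg_ne_zero.mpr hc)
        (by ring) (by ring) (by linarith [hf] )
  
lemma reduce [DecidableEq ι] (S : Finset ι) (f w : ι → ℝ) :
    ∀ (n : ℕ) (y : ι → ℝ), (∀ x ∈ S, 0 ≤ y x ∧ y x ≤ 1) → (frac S y).card ≤ n →
    ∃ y', (∀ x ∈ S, 0 ≤ y' x ∧ y' x ≤ 1) ∧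
      (∑ x ∈ S, y' x = ∑ x ∈ S, y x) ∧
      (∑ x ∈ S, w x * y' x = ∑ x ∈ S, w x * y x) ∧
      (∑ x ∈ S, f x * y' x ≤ ∑ x ∈ S, f x * y x) ∧
      (frac S y').card ≤ 2 := by
  intro n
  induction n with
  | zero => exact fun y hbox hcard => ⟨y, hbox, rfl, rfl, le_rfl, by omega⟩
  | succ n ih =>
    intro y hbox hcard
    by_cases hle : (frac S y).card ≤ 2
    · exact ⟨y, hbox, rfl, rfl, le_rfl, hle⟩
    · obtain ⟨y1, hbox1, hs1, hw1, hf1, hlt⟩ := onestep S f w y hbox (by omega)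
      obtain ⟨y', b, s, w2, f2, c2⟩ := ih y1 hbox1 (by omega)
      exact ⟨y', b, s.trans hs1, w2.trans hw1, f2.trans hf1, c2⟩
lemma intsum (T : Finset ι) (y : ι → ℝ) (h : ∀ x ∈ T, y x = 0 ∨ y x = 1) :
    ∃ n : ℕ, ∑ x ∈ T, y x = n := by
  classical
  revert h
  induction T using Finset.induction_on with
  | empty => intro _; exact ⟨0, by simp⟩
  | insert _ _ ha ih =>
    rename_i a s
    intro h
    obtain ⟨n, hn⟩ := ih (fun x hx => h x (Finset.mem_insert_of_mem hx))
    rcases h a (Finset.mem_insert_self a s) with h0 | h1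
    · exact ⟨n, by rw [Finset.sum_insert ha, hn, h0, zero_add]⟩
    · exact ⟨n + 1, by rw [Finset.sum_insert ha, hn, h1]; push_cast; ring⟩

lemma sum_shift2 [DecidableEq ι] (S : Finset ι) {i j : ι} (hi : i ∈ S) (hj : j ∈ S)
    (u y : ι → ℝ) (α β : ℝ) :
    ∑ x ∈ S, u x * (y x + ((if x = i then α else 0) + (if x = j then β else 0)))
      = ∑ x ∈ S, u x * y x + (u i * α + u j * β) := by
  simp only [mul_add, Finset.sum_add_distrib, sum_bump S hi, sum_bump S hj]

lemma finish2 [DecidableEq ι] (S : Finset ι) (f w y' : ι → ℝ) {i j : ι} {M m : ℝ}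
    (hiS : i ∈ S) (hjS : j ∈ S) (hij : i ≠ j)
    (hbox : ∀ x ∈ S, 0 ≤ y' x ∧ y' x ≤ 1)
    (hrest : ∀ x ∈ S, x ≠ i → x ≠ j → (y' x = 0 ∨ y' x = 1))
    (hone : y' i + y' j = 1)
    (hwij : w j ≤ w i)
    (hfiM : f i ≤ M) (hmfj : m ≤ f j) (hmM : m ≤ M) :
    ∃ yhat : ι → ℝ, (∀ x ∈ S, yhat x = 0 ∨ yhat x = 1) ∧
      ∑ x ∈ S, w x * y' x ≤ ∑ x ∈ S, w x * yhat x ∧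
      ∑ x ∈ S, f x * yhat x ≤ ∑ x ∈ S, f x * y' x + (M - m) := by
  obtain ⟨hj0, hj1⟩ := hbox j hjS
  refine ⟨fun x => y' x + ((if x = i then y' j else 0) + (if x = j then -(y' j) else 0)),
    ?_, ?_, ?_⟩
  · intro x hx
    by_cases hxi : x = i
    · subst hxi
      right
      simp [hij]
      linarith
    · by_cases hxj : x = j
      · subst hxj
        left
        simp [Ne.symm hij]
      · rcases hrest x hx hxi hxj with h | h
        · left; simp [hxi, hxj, h]
        · right; simp [hxi, hxj, h]
  · rw [sum_shift2 S hiS hjS w y' (y' j) (-(y' j))]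
    nlinarith [mul_nonneg (sub_nonneg.mpr hwij) hj0]
  · rw [sum_shift2 S hiS hjS f y' (y' j) (-(y' j))]
    nlinarith [mul_le_mul_of_nonneg_right hfiM hj0, mul_le_mul_of_nonneg_right hmfj hj0,
      mul_le_mul_of_nonneg_left hj1 (sub_nonneg.mpr hmM)]

lemma arith {m M F C Hr : ℝ} (hm : 0 < m) (hmM : m ≤ M) (hH : 1 ≤ Hr)
    (hF : Hr * m ≤ F) (hC : C ≤ F + (M - m)) :
    C ≤ (1 - 1 / Hr + M / (Hr * m)) * F := by
  have hH0 : 0 < Hr := by linarith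
  have hHm : 0 < Hr * m := by positivity
  have key : (1 - 1 / Hr + M / (Hr * m)) * F = F + F * ((M - m) / (Hr * m)) := by
    field_simp
    ring
  have h2 : M - m ≤ F * ((M - m) / (Hr * m)) := by
    rw [mul_div_assoc']
    rw [le_div_iff₀ hHm]
    nlinarith [mul_le_mul_of_nonneg_left hF (sub_nonneg.mpr hmM)]
  linarith
end Stmt15

/-- (Lemma A.1(a) of the paper.) Rounding a fractional vector with
`Σ ȳ_i = H` to a 0/1 vector keeping the covered weight while increasing the cost by a
factor at most `1 − 1/H + f^max/(H·f^min)`. -/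
theorem stmt15
    {ι : Type*} (S : Finset ι) (hS : S.Nonempty)
    (f w : ι → ℝ) (hf : ∀ i ∈ S, 0 < f i) (hw : ∀ i ∈ S, 0 ≤ w i)
    (H : ℕ) (hH : 1 ≤ H)
    (ybar : ι → ℝ) (hybar : ∀ i ∈ S, 0 ≤ ybar i ∧ ybar i ≤ 1)
    (hsum : ∑ i ∈ S, ybar i = (H : ℝ)) :
    ∃ yhat : ι → ℝ,
      (∀ i ∈ S, yhat i = 0 ∨ yhat i = 1) ∧
      (∑ i ∈ S, w i * ybar i ≤ ∑ i ∈ S, w i * yhat i) ∧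
      (∑ i ∈ S, f i * yhat i ≤
        (1 - 1 / (H : ℝ) + (S.sup' hS f) / ((H : ℝ) * S.inf' hS f)) *
          ∑ i ∈ S, f i * ybar i) := by
  classical
  obtain ⟨y', hbox', hsum', hwsum', hfsum', hcard⟩ :=
    Stmt15.reduce S f w (Stmt15.frac S ybar).card ybar hybar le_rfl
  set m := S.inf' hS f with hm
  set M := S.sup' hS f with hM
  have hm0 : 0 < m := by
    rw [hm]
    exact (Finset.lt_inf'_iff hS).mpr hf
  obtain ⟨i0, hi0⟩ := hS
  have hmM : m ≤ M := le_trans (Finset.inf'_le f hi0) (Finset.le_sup' f hi0)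
  have hH1 : (1:ℝ) ≤ (H:ℝ) := by exact_mod_cast hH
  have hF : (H : ℝ) * m ≤ ∑ x ∈ S, f x * ybar x := by
    have h1 : ∀ x ∈ S, m * ybar x ≤ f x * ybar x := fun x hx =>
      mul_le_mul_of_nonneg_right (Finset.inf'_le f hx) (hybar x hx).1
    calc (H : ℝ) * m = m * ∑ x ∈ S, ybar x := by rw [hsum]; ring
    _ = ∑ x ∈ S, m * ybar x := by rw [Finset.mul_sum]
    _ ≤ ∑ x ∈ S, f x * ybar x := Finset.sum_le_sum h1
  have hsumH : ∑ x ∈ S, y' x = (H : ℝ) := hsum'.trans hsum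
  have hc : (Stmt15.frac S y').card = 0 ∨ (Stmt15.frac S y').card = 1 ∨
      (Stmt15.frac S y').card = 2 := by omega
  rcases hc with h0 | h1 | h2
  · -- already integral
    have hint : ∀ x ∈ S, y' x = 0 ∨ y' x = 1 := by
      intro x hx
      by_contra hcon
      push_neg at hcon
      have : x ∈ Stmt15.frac S y' := Stmt15.mem_frac.mpr ⟨hx, hcon⟩
      rw [Finset.card_eq_zero] at h0
      simp [h0] at this
    refine ⟨y', hint, le_of_eq hwsum'.symm, ?_⟩
    exact Stmt15.arith hm0 hmM hH1 hF (by linarith)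
  · -- impossible
    exfalso
    obtain ⟨i, hfr⟩ := Finset.card_eq_one.mp h1
    have hifr : i ∈ Stmt15.frac S y' := by rw [hfr]; exact Finset.mem_singleton_self i
    obtain ⟨hiS, hi0', hi1'⟩ := Stmt15.mem_frac.mp hifr
    obtain ⟨n, hn⟩ := Stmt15.intsum (S.erase i) y' (by
      intro x hx
      obtain ⟨hxi, hxS⟩ := Finset.mem_erase.mp hx
      by_contra hcon
      push_neg at hcon
      have : x ∈ Stmt15.frac S y' := Stmt15.mem_frac.mpr ⟨hxS, hcon⟩
      rw [hfr, Finset.mem_singleton] at this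
      exact hxi this)
    have he : ∑ x ∈ S.erase i, y' x + y' i = ∑ x ∈ S, y' x := Finset.sum_erase_add S y' hiS
    obtain ⟨hb0, hb1⟩ := hbox' i hiS
    have hyi : y' i = (H : ℝ) - n := by rw [← hn]; linarith
    have hlt1 : (n : ℝ) < (H : ℝ) := by
      have : 0 < y' i := lt_of_le_of_ne hb0 (Ne.symm hi0')
      linarith
    have hlt2 : (H : ℝ) < (n : ℝ) + 1 := by
      have : y' i < 1 := lt_of_le_of_ne hb1 hi1'
      linarith
    have b1 : n < H := by exact_mod_cast hlt1
    have b2 : H < n + 1 := by exact_mod_cast hlt2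
    omega
  · -- two fractional coordinates
    obtain ⟨i, j, hij, hfr⟩ := Finset.card_eq_two.mp h2
    have hifr : i ∈ Stmt15.frac S y' := by rw [hfr]; simp
    have hjfr : j ∈ Stmt15.frac S y' := by rw [hfr]; simp
    obtain ⟨hiS, hi0', hi1'⟩ := Stmt15.mem_frac.mp hifr
    obtain ⟨hjS, hj0', hj1'⟩ := Stmt15.mem_frac.mp hjfr
    have hrest : ∀ x ∈ S, x ≠ i → x ≠ j → (y' x = 0 ∨ y' x = 1) := by
      intro x hx hxi hxj
      by_contra hcon
      push_neg at hcon
      have : x ∈ Stmt15.frac S y' := Stmt15.mem_frac.mpr ⟨hx, hcon⟩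
      rw [hfr, Finset.mem_insert, Finset.mem_singleton] at this
      tauto
    have hjmem : j ∈ S.erase i := Finset.mem_erase.mpr ⟨Ne.symm hij, hjS⟩
    obtain ⟨n, hn⟩ := Stmt15.intsum ((S.erase i).erase j) y' (by
      intro x hx
      obtain ⟨hxj, hx2⟩ := Finset.mem_erase.mp hx
      obtain ⟨hxi, hxS⟩ := Finset.mem_erase.mp hx2
      exact hrest x hxS hxi hxj)
    have e1 : ∑ x ∈ (S.erase i).erase j, y' x + y' j = ∑ x ∈ S.erase i, y' x :=
      Finset.sum_erase_add _ y' hjmem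
    have e2 : ∑ x ∈ S.erase i, y' x + y' i = ∑ x ∈ S, y' x := Finset.sum_erase_add S y' hiS
    obtain ⟨hbi0, hbi1⟩ := hbox' i hiS
    obtain ⟨hbj0, hbj1⟩ := hbox' j hjS
    have hyij : y' i + y' j = (H : ℝ) - n := by rw [← hn]; linarith
    have hp1 : 0 < y' i := lt_of_le_of_ne hbi0 (Ne.symm hi0')
    have hp2 : y' i < 1 := lt_of_le_of_ne hbi1 hi1'
    have hp3 : 0 < y' j := lt_of_le_of_ne hbj0 (Ne.symm hj0')
    have hp4 : y' j < 1 := lt_of_le_of_ne hbj1 hj1'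
    have hone : y' i + y' j = 1 := by
      have b1 : (n : ℝ) < (H : ℝ) := by linarith
      have b2 : (H : ℝ) < (n : ℝ) + 2 := by linarith
      have b1' : n < H := by exact_mod_cast b1
      have b2' : H < n + 2 := by exact_mod_cast b2
      have : H = n + 1 := by omega
      rw [hyij, this]
      push_cast
      ring
    rcases le_total (w j) (w i) with hw' | hw'
    · obtain ⟨yhat, h01, hcov, hcost⟩ := Stmt15.finish2 S f w y' hiS hjS hij hbox' hrest hone
        hw' (Finset.le_sup' f hiS) (Finset.inf'_le f hjS) hmM
      refine ⟨yhat, h01, by linarith, ?_⟩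
      exact Stmt15.arith hm0 hmM hH1 hF (by linarith)
    · obtain ⟨yhat, h01, hcov, hcost⟩ := Stmt15.finish2 S f w y' hjS hiS (Ne.symm hij) hbox'
        (fun x hx h1 h2 => hrest x hx h2 h1) (by linarith) hw'
        (Finset.le_sup' f hjS) (Finset.inf'_le f hiS) hmM
      refine ⟨yhat, h01, by linarith, ?_⟩
      exact Stmt15.arith hm0 hmM hH1 hF (by linarith)
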